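/- Let N ≥ 3. If an entangled N-qubit pure state |ψ⟩ is fragile with respect to the loss of every single qubit (ρ_{¬k}(ψ) separable for all k = 1,…,N), then |ψ⟩ is SLOCC-equivalent to the GHZ state: there exist invertible 2×2 complex matrices B_1,…,B_N such that (B_1 ⊗ ⋯ ⊗ B_N)|ψ⟩ = |GHZ_N⟩ up to a global phase. -/

import Mathlib

open scoped BigOperators ComplexConjugate

noncomputable section

/-- A single-qubit unit vector in `ℂ²`. -/
def IsUnitQubit (e : Fin 2 → ℂ) : Prop := ∑ j, Complex.normSq (e j) = 1

/-- Norm-one condition for a multiqubit vector on the register `ι`. -/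
def IsUnitState {ι : Type*} [Fintype ι] [DecidableEq ι] (ψ : (ι → Fin 2) → ℂ) : Prop :=
  ∑ x, Complex.normSq (ψ x) = 1

/-- The product state `⊗ᵢ eᵢ`. -/
def prodState {ι : Type*} [Fintype ι] (e : ι → Fin 2 → ℂ) : (ι → Fin 2) → ℂ :=
  fun x => ∏ i, e i (x i)

/-- A pure state is a product state if it is a tensor product of single-qubit unit vectors. -/
def IsProductState {ι : Type*} [Fintype ι] (ψ : (ι → Fin 2) → ℂ) : Prop :=
  ∃ e : ι → Fin 2 → ℂ, (∀ i, IsUnitQubit (e i)) ∧ ψ = prodState e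

/-- A pure state is entangled if it is not a product state. -/
def IsEntangledState {ι : Type*} [Fintype ι] (ψ : (ι → Fin 2) → ℂ) : Prop :=
  ¬ IsProductState ψ

/-- The projector `|v⟩⟨v|` as a matrix. -/
def proj {α : Type*} (v : α → ℂ) : Matrix α α ℂ :=
  Matrix.of fun x y => v x * conj (v y)

/-- A density matrix on the qubit register `ι` is separable if it is a finite convex
combination of projectors onto product states (and entangled otherwise). -/
def IsSeparableDensity {ι : Type*} [Fintype ι] (ρ : Matrix (ι → Fin 2) (ι → Fin 2) ℂ) : Prop :=
  ∃ (n : ℕ) (w : Fin n → ℝ) (e : Fin n → ι → Fin 2 → ℂ),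
    (∀ m, 0 ≤ w m) ∧ (∑ m, w m = 1) ∧ (∀ m i, IsUnitQubit (e m i)) ∧
    ρ = ∑ m, (w m : ℂ) • proj (prodState (e m))

/-- Assemble a full assignment of the `N` qubits from an assignment `x` of the qubits outside
`S` and an assignment `z` of the qubits in `S`. -/
def mergeCompl {N : ℕ} (S : Finset (Fin N)) (x : {i : Fin N // i ∉ S} → Fin 2)
    (z : {i : Fin N // i ∈ S} → Fin 2) : Fin N → Fin 2 :=
  fun i => if h : i ∈ S then z ⟨i, h⟩ else x ⟨i, h⟩

/-- The reduced density operator `ρ_{¬S}(ψ)`: the partial trace of `|ψ⟩⟨ψ|` over the qubits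
in `S`. -/
def reducedState {N : ℕ} (ψ : (Fin N → Fin 2) → ℂ) (S : Finset (Fin N)) :
    Matrix ({i : Fin N // i ∉ S} → Fin 2) ({i : Fin N // i ∉ S} → Fin 2) ℂ :=
  Matrix.of fun x y => ∑ z : {i : Fin N // i ∈ S} → Fin 2,
    ψ (mergeCompl S x z) * conj (ψ (mergeCompl S y z))

/-- The action of the local operator `B₁ ⊗ ⋯ ⊗ B_N` on an `N`-qubit state. -/
def applyLocal {N : ℕ} (B : Fin N → Matrix (Fin 2) (Fin 2) ℂ)
    (ψ : (Fin N → Fin 2) → ℂ) : (Fin N → Fin 2) → ℂ :=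
  fun x => ∑ y : Fin N → Fin 2, (∏ i, B i (x i) (y i)) * ψ y

/-- The `N`-qubit GHZ state `(|0…0⟩ + |1…1⟩)/√2`. -/
def ghzState (N : ℕ) : (Fin N → Fin 2) → ℂ :=
  fun x => ((if x = fun _ => 0 then (1 : ℂ) else 0) + (if x = fun _ => 1 then (1 : ℂ) else 0))
    / (Real.sqrt 2 : ℝ)

set_option linter.unusedSectionVars false

namespace GhzAux


variable {α : Type*} [Fintype α] [DecidableEq α]

/-- inner product, conjugate-linear in the first argument -/
def inn (u v : α → ℂ) : ℂ := ∑ x, conj (u x) * v x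

lemma inn_conj (u v : α → ℂ) : inn v u = conj (inn u v) := by
  simp [inn, Finset.sum_comm, map_sum, mul_comm]

lemma inn_self_eq (u : α → ℂ) : inn u u = ((∑ x, Complex.normSq (u x) : ℝ) : ℂ) := by
  simp [inn, Complex.normSq_eq_conj_mul_self]

lemma eq_zero_of_inn_self (u : α → ℂ) (h : inn u u = 0) : u = 0 := by
  rw [inn_self_eq] at h
  have h' : (∑ x, Complex.normSq (u x) : ℝ) = 0 := by exact_mod_cast h
  have := (Finset.sum_eq_zero_iff_of_nonneg (fun x _ => Complex.normSq_nonneg (u x))).mp h'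
  funext x
  exact Complex.normSq_eq_zero.mp (this x (Finset.mem_univ x))

lemma inn_eq_inner (u v : α → ℂ) :
    inn u v = @inner ℂ (EuclideanSpace ℂ α) _ (WithLp.toLp 2 u) (WithLp.toLp 2 v) := by
  rw [PiLp.inner_apply]
  simp [inn, RCLike.inner_apply, mul_comm]

lemma mem_span_single (u w : α → ℂ) (h : ∀ x, inn u x = 0 → inn w x = 0) :
    ∃ c : ℂ, c • u = w := by
  let U : EuclideanSpace ℂ α := WithLp.toLp 2 u
  let W : EuclideanSpace ℂ α := WithLp.toLp 2 w
  have hW : W ∈ (Submodule.span ℂ {U})ᗮᗮ := by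
    rw [Submodule.mem_orthogonal]
    intro x hx
    rw [Submodule.mem_orthogonal] at hx
    have hU : inn u x.ofLp = 0 := by
      rw [inn_eq_inner]; exact hx U (Submodule.subset_span rfl)
    have hw := h x.ofLp hU
    rw [inn_eq_inner] at hw
    rw [← inner_conj_symm, show inner ℂ W x = 0 from hw, map_zero]
  rw [Submodule.orthogonal_orthogonal] at hW
  obtain ⟨c, hc⟩ := Submodule.mem_span_singleton.mp hW
  exact ⟨c, by have := congrArg WithLp.ofLp hc; simpa using this⟩

lemma mem_span_pair (u v w : α → ℂ)
    (h : ∀ x, inn u x = 0 → inn v x = 0 → inn w x = 0) :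
    ∃ s t : ℂ, (fun y => s * u y + t * v y) = w := by
  let U : EuclideanSpace ℂ α := WithLp.toLp 2 u
  let V : EuclideanSpace ℂ α := WithLp.toLp 2 v
  let W : EuclideanSpace ℂ α := WithLp.toLp 2 w
  have hW : W ∈ (Submodule.span ℂ {U, V})ᗮᗮ := by
    rw [Submodule.mem_orthogonal]
    intro x hx
    rw [Submodule.mem_orthogonal] at hx
    have hU : inn u x.ofLp = 0 := by
      rw [inn_eq_inner]; exact hx U (Submodule.subset_span (by simp))
    have hV : inn v x.ofLp = 0 := by
      rw [inn_eq_inner]; exact hx V (Submodule.subset_span (by simp))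
    have hw := h x.ofLp hU hV
    rw [inn_eq_inner] at hw
    rw [← inner_conj_symm, show inner ℂ W x = 0 from hw, map_zero]
  rw [Submodule.orthogonal_orthogonal] at hW
  obtain ⟨s, t, hst⟩ := Submodule.mem_span_pair.mp hW
  exact ⟨s, t, by funext y; have := congrFun (congrArg WithLp.ofLp hst) y; simpa using this⟩

lemma inn_smul_right (u v : α → ℂ) (c : ℂ) : inn u (c • v) = c * inn u v := by
  simp [inn, Finset.mul_sum]
  exact Finset.sum_congr rfl fun x _ => by ring

/-- the quadratic form `⟨a| M |a⟩` -/
def QF (a : α → ℂ) (M : Matrix α α ℂ) : ℂ := ∑ x, ∑ y, conj (a x) * M x y * a y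

lemma QF_proj (a v : α → ℂ) : QF a (proj v) = ((Complex.normSq (inn a v) : ℝ) : ℂ) := by
  have : QF a (proj v) = (∑ x, conj (a x) * v x) * (∑ y, conj (v y) * a y) := by
    rw [Finset.sum_mul_sum]
    simp only [QF, proj, Matrix.of_apply]
    refine Finset.sum_congr rfl fun x _ => Finset.sum_congr rfl fun y _ => by ring
  rw [this]
  have h2 : (∑ y, conj (v y) * a y) = conj (inn a v) := by
    simp [inn, map_sum, mul_comm]
  rw [h2, show (∑ x, conj (a x) * v x) = inn a v from rfl, Complex.mul_conj]

lemma QF_add (a : α → ℂ) (M₁ M₂ : Matrix α α ℂ) : QF a (M₁ + M₂) = QF a M₁ + QF a M₂ := by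
  simp [QF, Matrix.add_apply, mul_add, add_mul, Finset.sum_add_distrib]

lemma QF_smul (a : α → ℂ) (c : ℂ) (M : Matrix α α ℂ) : QF a (c • M) = c * QF a M := by
  simp only [QF, Matrix.smul_apply, smul_eq_mul, Finset.mul_sum]
  refine Finset.sum_congr rfl fun x _ => Finset.sum_congr rfl fun y _ => by ring

lemma QF_sum {n : ℕ} (a : α → ℂ) (M : Fin n → Matrix α α ℂ) :
    QF a (∑ m, M m) = ∑ m, QF a (M m) := by
  induction n with
  | zero => simp [QF]
  | succ n ih =>
    rw [Fin.sum_univ_castSucc, QF_add, ih, Fin.sum_univ_castSucc (f := fun m => QF a (M m))]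

/-- the central quadratic-form identity from a separable decomposition -/
lemma qf_eq {n : ℕ} (ρ : Matrix α α ℂ) (w : Fin n → ℝ) (P : Fin n → α → ℂ)
    (h : ρ = ∑ m, (w m : ℂ) • proj (P m)) (a : α → ℂ) :
    QF a ρ = ((∑ m, w m * Complex.normSq (inn a (P m)) : ℝ) : ℂ) := by
  rw [h, QF_sum]
  push_cast
  exact Finset.sum_congr rfl fun m _ => by rw [QF_smul, QF_proj]


variable {ι : Type*} [Fintype ι] [DecidableEq ι]

lemma sum_normSq_prodState (e : ι → Fin 2 → ℂ) :
    ∑ x : ι → Fin 2, Complex.normSq (prodState e x) = ∏ i, ∑ j, Complex.normSq (e i j) := by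
  have h1 : ∀ x : ι → Fin 2, Complex.normSq (prodState e x) = ∏ i, Complex.normSq (e i (x i)) :=
    fun x => by rw [prodState, map_prod]
  simp only [h1]
  rw [Finset.prod_univ_sum]
  rw [Fintype.piFinset_univ]

lemma isUnitState_prodState (e : ι → Fin 2 → ℂ) (h : ∀ i, IsUnitQubit (e i)) :
    IsUnitState (prodState e) := by
  rw [IsUnitState, sum_normSq_prodState]
  exact Finset.prod_eq_one fun i _ => h i

lemma prodState_ne_zero (e : ι → Fin 2 → ℂ) (h : ∀ i, IsUnitQubit (e i)) :
    prodState e ≠ 0 := by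
  intro h0
  have := isUnitState_prodState e h
  rw [IsUnitState, h0] at this
  simp at this

lemma ne_zero_of_isUnitState {ψ : (ι → Fin 2) → ℂ} (h : IsUnitState ψ) : ψ ≠ 0 := by
  intro h0; rw [IsUnitState, h0] at h; simp at h

/-- normalization: a unit state that is a product of nonzero factors is a product state -/
lemma isProductState_of_factors (ψ : (ι → Fin 2) → ℂ) (hunit : IsUnitState ψ)
    (G : ι → Fin 2 → ℂ) (hG : ψ = prodState G) : IsProductState ψ := by
  set n : ι → ℝ := fun i => ∑ j, Complex.normSq (G i j) with hn
  have hprod : ∏ i, n i = 1 := by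
    rw [IsUnitState, hG, sum_normSq_prodState] at hunit; exact hunit
  have hnn : ∀ i, 0 ≤ n i := fun i => Finset.sum_nonneg fun j _ => Complex.normSq_nonneg _
  have hpos : ∀ i, 0 < n i := by
    intro i
    rcases lt_or_eq_of_le (hnn i) with h | h
    · exact h
    · exfalso
      have : ∏ i, n i = 0 := Finset.prod_eq_zero (Finset.mem_univ i) h.symm
      rw [hprod] at this; norm_num at this
  refine ⟨fun i => ((Real.sqrt (n i) : ℂ))⁻¹ • G i, ?_, ?_⟩
  · intro i
    have hs : Real.sqrt (n i) ≠ 0 := Real.sqrt_ne_zero'.mpr (hpos i)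
    rw [IsUnitQubit]
    have : ∀ j, Complex.normSq ((((Real.sqrt (n i) : ℂ))⁻¹ • G i) j)
        = (n i)⁻¹ * Complex.normSq (G i j) := by
      intro j
      simp only [Pi.smul_apply, smul_eq_mul, Complex.normSq_mul, Complex.normSq_inv]
      rw [Complex.normSq_ofReal, Real.mul_self_sqrt (hnn i)]
    simp only [this, ← Finset.mul_sum]
    exact inv_mul_cancel₀ (ne_of_gt (hpos i))
  · have hsp : ∏ i, Real.sqrt (n i) = 1 := by
      have h2 : (∏ i, Real.sqrt (n i))^2 = ∏ i, n i := by
        rw [← Finset.prod_pow]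
        exact Finset.prod_congr rfl fun i _ => Real.sq_sqrt (hnn i)
      have h3 : 0 ≤ ∏ i, Real.sqrt (n i) :=
        Finset.prod_nonneg fun i _ => Real.sqrt_nonneg _
      calc ∏ i, Real.sqrt (n i) = Real.sqrt ((∏ i, Real.sqrt (n i))^2) := (Real.sqrt_sq h3).symm
        _ = 1 := by rw [h2, hprod, Real.sqrt_one]
    rw [hG]
    funext x
    simp only [prodState, Pi.smul_apply, smul_eq_mul]
    rw [Finset.prod_mul_distrib, Finset.prod_inv_distrib]
    have : (∏ i, ((Real.sqrt (n i) : ℂ))) = 1 := by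
      rw [← Complex.ofReal_prod, hsp, Complex.ofReal_one]
    rw [this]
    simp



lemma fin2_dep (u v : Fin 2 → ℂ) (h : u 0 * v 1 - u 1 * v 0 = 0) :
    (∃ c : ℂ, v = c • u) ∨ u = 0 := by
  by_cases h0 : u 0 = 0
  · by_cases h1 : u 1 = 0
    · right; funext j; fin_cases j <;> simp [h0, h1]
    · left
      refine ⟨v 1 / u 1, ?_⟩
      have hv0 : v 0 = 0 := by
        rw [h0, zero_mul, zero_sub, neg_eq_zero, mul_eq_zero] at h
        tauto
      funext j; fin_cases j <;> simp [h0, hv0, h1]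
  · left
    refine ⟨v 0 / u 0, ?_⟩
    have h' : u 0 * v 1 = u 1 * v 0 := sub_eq_zero.mp h
    have hv1 : v 1 = v 0 / u 0 * u 1 := by
      field_simp
      linear_combination h'
    funext j; fin_cases j <;> simp [hv1, div_mul_cancel₀, h0]

variable {N : ℕ}

lemma restrict_mergeCompl (S : Finset (Fin N)) (x : {i : Fin N // i ∉ S} → Fin 2)
    (z : {i : Fin N // i ∈ S} → Fin 2) :
    (fun i : {i : Fin N // i ∉ S} => mergeCompl S x z i.1) = x := by
  funext i
  simp [mergeCompl, i.2]

lemma mergeCompl_mem (S : Finset (Fin N)) (x : {i : Fin N // i ∉ S} → Fin 2)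
    (z : {i : Fin N // i ∈ S} → Fin 2) {k : Fin N} (hk : k ∈ S) :
    mergeCompl S x z k = z ⟨k, hk⟩ := by
  simp [mergeCompl, hk]

lemma mergeCompl_self (k : Fin N) (x : Fin N → Fin 2) :
    mergeCompl ({k} : Finset (Fin N)) (fun i => x i.1) (fun _ => x k) = x := by
  funext i
  by_cases h : i ∈ ({k} : Finset (Fin N))
  · have : i = k := Finset.mem_singleton.mp h
    simp [mergeCompl, h, this]
  · simp [mergeCompl, h]

lemma sum_fun_singleton (k : Fin N)
    (f : ({i : Fin N // i ∈ ({k} : Finset (Fin N))} → Fin 2) → ℂ) :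
    ∑ z, f z = f (fun _ => 0) + f (fun _ => 1) := by
  haveI : Unique {i : Fin N // i ∈ ({k} : Finset (Fin N))} :=
    ⟨⟨⟨k, Finset.mem_singleton_self k⟩⟩, fun a => Subtype.ext (Finset.mem_singleton.mp a.2)⟩
  rw [← Equiv.sum_comp (Equiv.funUnique {i : Fin N // i ∈ ({k} : Finset (Fin N))} (Fin 2)).symm f]
  rw [Fin.sum_univ_two]
  rfl

lemma prod_split (k : Fin N) (G : Fin N → ℂ) :
    ∏ i, G i = G k * ∏ i : {i : Fin N // i ∉ ({k} : Finset (Fin N))}, G i.1 := by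
  rw [← Finset.prod_mul_prod_compl ({k} : Finset (Fin N)) G, Finset.prod_singleton]
  congr 1
  exact Finset.prod_subtype ({k}ᶜ : Finset (Fin N)) (fun i => by simp) G


variable {N : ℕ}

lemma factor_contra (ψ : (Fin N → Fin 2) → ℂ) (k : Fin N)
    (hunit : IsUnitState ψ)
    (hsep : IsSeparableDensity (reducedState ψ ({k} : Finset (Fin N))))
    (v : Fin 2 → ℂ) (σ : ({i : Fin N // i ∉ ({k} : Finset (Fin N))} → Fin 2) → ℂ)
    (hψ : ∀ x, ψ x = v (x k) * σ (fun i => x i.1)) :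
    IsProductState ψ := by
  have hne : ∃ x, ψ x ≠ 0 := by
    by_contra hc
    push_neg at hc
    exact ne_zero_of_isUnitState hunit (funext hc)
  obtain ⟨x₀, hx₀⟩ := hne
  have hv : v (x₀ k) ≠ 0 := fun h => hx₀ (by rw [hψ, h, zero_mul])
  set n : ℝ := Complex.normSq (v 0) + Complex.normSq (v 1) with hn
  have hnpos : 0 < n := by
    have h01 : x₀ k = 0 ∨ x₀ k = 1 := by omega
    rcases h01 with h | h <;> rw [h] at hv
    · exact add_pos_of_pos_of_nonneg (Complex.normSq_pos.mpr hv) (Complex.normSq_nonneg _)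
    · exact add_pos_of_nonneg_of_pos (Complex.normSq_nonneg _) (Complex.normSq_pos.mpr hv)
  have hterm : ∀ (u : {i : Fin N // i ∉ ({k} : Finset (Fin N))} → Fin 2)
      (z : {i : Fin N // i ∈ ({k} : Finset (Fin N))} → Fin 2),
      ψ (mergeCompl {k} u z) = v (z ⟨k, Finset.mem_singleton_self k⟩) * σ u := by
    intro u z
    rw [hψ, mergeCompl_mem _ _ _ (Finset.mem_singleton_self k), restrict_mergeCompl]
  have hred : reducedState ψ ({k} : Finset (Fin N)) = (n : ℂ) • proj σ := by
    ext x y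
    show (∑ z : {i : Fin N // i ∈ ({k} : Finset (Fin N))} → Fin 2,
      ψ (mergeCompl {k} x z) * conj (ψ (mergeCompl {k} y z))) = _
    rw [sum_fun_singleton k (fun z => ψ (mergeCompl {k} x z) * conj (ψ (mergeCompl {k} y z)))]
    rw [hterm x, hterm y, hterm x, hterm y]
    show _ = (n : ℂ) * (σ x * conj (σ y))
    simp only [map_mul]
    rw [hn]
    push_cast
    rw [← Complex.mul_conj (v 0), ← Complex.mul_conj (v 1)]
    ring
  obtain ⟨nn, w, e, hw0, hw1, hwe, hρ⟩ := hsep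
  have key : ∀ a, n * Complex.normSq (inn a σ)
      = ∑ m, w m * Complex.normSq (inn a (prodState (e m))) := by
    intro a
    have h1 := qf_eq (reducedState ψ ({k} : Finset (Fin N))) w (fun m => prodState (e m)) hρ a
    rw [hred, QF_smul, QF_proj] at h1
    exact_mod_cast h1
  have hm : ∃ m, w m ≠ 0 := by
    by_contra hc
    push_neg at hc
    rw [Finset.sum_eq_zero (fun m _ => hc m)] at hw1
    norm_num at hw1
  obtain ⟨m₀, hm₀⟩ := hm
  have h1 : ∀ x, inn σ x = 0 → inn (prodState (e m₀)) x = 0 := by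
    intro x hx
    have hx' : inn x σ = 0 := by rw [inn_conj σ x, hx, map_zero]
    have h2 := key x
    rw [hx', Complex.normSq_zero, mul_zero] at h2
    have h3 := (Finset.sum_eq_zero_iff_of_nonneg
      (fun m _ => mul_nonneg (hw0 m) (Complex.normSq_nonneg _))).mp h2.symm m₀ (Finset.mem_univ m₀)
    have h4 : Complex.normSq (inn x (prodState (e m₀))) = 0 := by
      rcases mul_eq_zero.mp h3 with h | h
      · exact absurd h hm₀
      · exact h
    have h5 : inn x (prodState (e m₀)) = 0 := Complex.normSq_eq_zero.mp h4
    rw [inn_conj x (prodState (e m₀)), h5, map_zero]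
  obtain ⟨c, hc⟩ := mem_span_single σ (prodState (e m₀)) h1
  have hcne : c ≠ 0 := by
    intro h
    rw [h, zero_smul] at hc
    exact prodState_ne_zero (e m₀) (hwe m₀) hc.symm
  apply isProductState_of_factors ψ hunit
    (fun i => if h : i ∈ ({k} : Finset (Fin N)) then c⁻¹ • v else e m₀ ⟨i, h⟩)
  funext x
  rw [hψ x]
  show _ = ∏ i, (if h : i ∈ ({k} : Finset (Fin N)) then c⁻¹ • v else e m₀ ⟨i, h⟩) (x i)
  rw [prod_split k]
  rw [dif_pos (Finset.mem_singleton_self k)]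
  have hrest : (∏ i : {i : Fin N // i ∉ ({k} : Finset (Fin N))},
      (if h : (i : Fin N) ∈ ({k} : Finset (Fin N)) then c⁻¹ • v else e m₀ ⟨i, h⟩) (x i))
      = prodState (e m₀) (fun i => x i.1) := by
    refine Finset.prod_congr rfl fun i _ => ?_
    rw [dif_neg i.2]
  rw [hrest, ← hc]
  show v (x k) * σ (fun i => x i.1) = c⁻¹ * v (x k) * (c * σ (fun i => x i.1))
  field_simp

end GhzAux

/-- **Theorem 2 of the paper.** For `N ≥ 3`, every entangled `N`-qubit pure
state that is fragile with respect to the loss of every single qubit is SLOCC-equivalent to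
the GHZ state: some tensor product of invertible `2 × 2` matrices maps it, up to a global
phase, to `|GHZ_N⟩`. -/
theorem fragile_all_implies_slocc_ghz {N : ℕ} (hN : 3 ≤ N)
    (ψ : (Fin N → Fin 2) → ℂ) (hunit : IsUnitState ψ) (hent : IsEntangledState ψ)
    (hfrag : ∀ k : Fin N, IsSeparableDensity (reducedState ψ ({k} : Finset (Fin N)))) :
    ∃ (B : Fin N → Matrix (Fin 2) (Fin 2) ℂ) (c : ℂ),
      (∀ i, IsUnit (B i)) ∧ ‖c‖ = 1 ∧
      applyLocal B ψ = c • ghzState N := by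
  have hNpos : 0 < N := by omega
  set k0 : Fin N := ⟨0, hNpos⟩ with hk0
  -- the two "columns" of ψ with respect to qubit k0
  set φ : Fin 2 → (({i : Fin N // i ∉ ({k0} : Finset (Fin N))} → Fin 2) → ℂ) :=
    fun j x => ψ (mergeCompl {k0} x (fun _ => j)) with hφ
  have hψφ : ∀ x : Fin N → Fin 2, ψ x = φ (x k0) (fun i => x i.1) :=
    fun x => (congrArg ψ (GhzAux.mergeCompl_self k0 x)).symm
  -- the reduced state at k0 as a sum of two projectors
  have hred : reducedState ψ ({k0} : Finset (Fin N)) = proj (φ 0) + proj (φ 1) := by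
    ext x y
    show (∑ z : {i : Fin N // i ∈ ({k0} : Finset (Fin N))} → Fin 2,
      ψ (mergeCompl {k0} x z) * conj (ψ (mergeCompl {k0} y z))) = _
    rw [GhzAux.sum_fun_singleton k0
      (fun z => ψ (mergeCompl {k0} x z) * conj (ψ (mergeCompl {k0} y z)))]
    rfl
  obtain ⟨nn, w, e, hw0, hw1, hwe, hρ⟩ := hfrag k0
  have key : ∀ a, Complex.normSq (GhzAux.inn a (φ 0)) + Complex.normSq (GhzAux.inn a (φ 1))
      = ∑ m, w m * Complex.normSq (GhzAux.inn a (prodState (e m))) := by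
    intro a
    have h1 := GhzAux.qf_eq (reducedState ψ ({k0} : Finset (Fin N))) w
      (fun m => prodState (e m)) hρ a
    rw [hred, GhzAux.QF_add, GhzAux.QF_proj, GhzAux.QF_proj] at h1
    exact_mod_cast h1
  -- degenerate case A : φ 1 ∝ φ 0
  by_cases hA : ∃ c : ℂ, φ 1 = c • φ 0
  · obtain ⟨c, hc⟩ := hA
    refine absurd (GhzAux.factor_contra ψ k0 hunit (hfrag k0) ![1, c] (φ 0) ?_) hent
    intro x
    rw [hψφ x]
    have h01 : x k0 = 0 ∨ x k0 = 1 := by omega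
    rcases h01 with h | h <;> rw [h]
    · simp
    · rw [hc]; simp
  by_cases hA' : ∃ c : ℂ, φ 0 = c • φ 1
  · obtain ⟨c, hc⟩ := hA'
    refine absurd (GhzAux.factor_contra ψ k0 hunit (hfrag k0) ![c, 1] (φ 1) ?_) hent
    intro x
    rw [hψφ x]
    have h01 : x k0 = 0 ∨ x k0 = 1 := by omega
    rcases h01 with h | h <;> rw [h]
    · rw [hc]; simp
    · simp
  -- main case: find two independent product states
  have hm : ∃ m, w m ≠ 0 := by
    by_contra hc
    push_neg at hc
    rw [Finset.sum_eq_zero (fun m _ => hc m)] at hw1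
    norm_num at hw1
  obtain ⟨m₀, hm₀⟩ := hm
  set p := prodState (e m₀) with hpdef
  have hm1 : ∃ m₁, w m₁ ≠ 0 ∧ ¬ ∃ c : ℂ, prodState (e m₁) = c • p := by
    by_contra hc
    push_neg at hc
    have hj : ∀ x, GhzAux.inn p x = 0 →
        (GhzAux.inn (φ 0) x = 0 ∧ GhzAux.inn (φ 1) x = 0) := by
      intro x hx
      have hx' : GhzAux.inn x p = 0 := by rw [GhzAux.inn_conj p x, hx, map_zero]
      have h2 := key x
      have hR : ∀ m ∈ Finset.univ, w m * Complex.normSq (GhzAux.inn x (prodState (e m))) = 0 := by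
        intro m _
        by_cases hwm : w m = 0
        · rw [hwm, zero_mul]
        · obtain ⟨c, hc'⟩ := hc m hwm
          rw [hc', GhzAux.inn_smul_right, hx', mul_zero, Complex.normSq_zero, mul_zero]
      rw [Finset.sum_eq_zero hR] at h2
      have h3 : Complex.normSq (GhzAux.inn x (φ 0)) = 0 ∧
          Complex.normSq (GhzAux.inn x (φ 1)) = 0 := by
        constructor <;> nlinarith [Complex.normSq_nonneg (GhzAux.inn x (φ 0)),
          Complex.normSq_nonneg (GhzAux.inn x (φ 1))]
      constructor
      · rw [GhzAux.inn_conj x (φ 0), Complex.normSq_eq_zero.mp h3.1, map_zero]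
      · rw [GhzAux.inn_conj x (φ 1), Complex.normSq_eq_zero.mp h3.2, map_zero]
    obtain ⟨c0, hc0⟩ := GhzAux.mem_span_single p (φ 0) (fun x hx => (hj x hx).1)
    obtain ⟨c1, hc1⟩ := GhzAux.mem_span_single p (φ 1) (fun x hx => (hj x hx).2)
    by_cases h0 : c0 = 0
    · exact hA' ⟨0, by rw [← hc0, h0, zero_smul, zero_smul]⟩
    · exact hA ⟨c1 * c0⁻¹, by
        rw [← hc1, ← hc0, smul_smul, mul_assoc, inv_mul_cancel₀ h0, mul_one]⟩
  obtain ⟨m₁, hm₁w, hm₁ind⟩ := hm1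
  set q := prodState (e m₁) with hqdef
  have hPspan : ∀ m, w m ≠ 0 → ∀ x, GhzAux.inn (φ 0) x = 0 → GhzAux.inn (φ 1) x = 0 →
      GhzAux.inn (prodState (e m)) x = 0 := by
    intro m hwm x h0 h1
    have h0' : GhzAux.inn x (φ 0) = 0 := by rw [GhzAux.inn_conj (φ 0) x, h0, map_zero]
    have h1' : GhzAux.inn x (φ 1) = 0 := by rw [GhzAux.inn_conj (φ 1) x, h1, map_zero]
    have h2 := key x
    rw [h0', h1', Complex.normSq_zero, add_zero] at h2
    have h3 := (Finset.sum_eq_zero_iff_of_nonneg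
      (fun m' _ => mul_nonneg (hw0 m') (Complex.normSq_nonneg _))).mp h2.symm m (Finset.mem_univ m)
    have h4 : Complex.normSq (GhzAux.inn x (prodState (e m))) = 0 := by
      rcases mul_eq_zero.mp h3 with h | h
      · exact absurd h hwm
      · exact h
    rw [GhzAux.inn_conj x (prodState (e m)), Complex.normSq_eq_zero.mp h4, map_zero]
  obtain ⟨s0, t0, hp⟩ := GhzAux.mem_span_pair (φ 0) (φ 1) p (hPspan m₀ hm₀)
  obtain ⟨s1, t1, hq⟩ := GhzAux.mem_span_pair (φ 0) (φ 1) q (hPspan m₁ hm₁w)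
  set d : ℂ := s0 * t1 - t0 * s1 with hddef
  have hd : d ≠ 0 := by
    intro hd0
    rcases GhzAux.fin2_dep ![s0, t0] ![s1, t1] (by simpa using hd0) with ⟨c, hc'⟩ | h0
    · apply hm₁ind
      refine ⟨c, ?_⟩
      have hs1 : s1 = c * s0 := by simpa using congrFun hc' 0
      have ht1 : t1 = c * t0 := by simpa using congrFun hc' 1
      funext y
      have hpy := congrFun hp y
      have hqy := congrFun hq y
      show q y = c * p y
      rw [← hpy, ← hqy, hs1, ht1]
      ring
    · have hs0 : s0 = 0 := by simpa using congrFun h0 0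
      have ht0 : t0 = 0 := by simpa using congrFun h0 1
      apply GhzAux.prodState_ne_zero (e m₀) (hwe m₀)
      funext y
      have hpy := congrFun hp y
      show p y = 0
      rw [← hpy, hs0, ht0]
      ring
  -- coefficients of φ j in terms of p, q
  set a : Fin 2 → ℂ := ![d⁻¹ * t1, -(d⁻¹ * s1)] with hadef
  set b : Fin 2 → ℂ := ![-(d⁻¹ * t0), d⁻¹ * s0] with hbdef
  have hφab : ∀ (j : Fin 2) y, φ j y = a j * p y + b j * q y := by
    intro j y
    have hpy := congrFun hp y
    have hqy := congrFun hq y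
    have h01 : j = 0 ∨ j = 1 := by omega
    rcases h01 with h | h <;> subst h
    · show φ 0 y = d⁻¹ * t1 * p y + -(d⁻¹ * t0) * q y
      rw [← hpy, ← hqy]
      field_simp
      linear_combination (φ 0 y) * hddef
    · show φ 1 y = -(d⁻¹ * s1) * p y + d⁻¹ * s0 * q y
      rw [← hpy, ← hqy]
      field_simp
      linear_combination (φ 1 y) * hddef
  -- the two global product vectors
  set E : Fin N → Fin 2 → ℂ :=
    fun i => if h : i ∈ ({k0} : Finset (Fin N)) then a else e m₀ ⟨i, h⟩ with hEdef
  set F : Fin N → Fin 2 → ℂ :=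
    fun i => if h : i ∈ ({k0} : Finset (Fin N)) then b else e m₁ ⟨i, h⟩ with hFdef
  have hprodE : ∀ x : Fin N → Fin 2, prodState E x = a (x k0) * p (fun i => x i.1) := by
    intro x
    rw [prodState, GhzAux.prod_split k0 (fun i => E i (x i))]
    have h1 : E k0 (x k0) = a (x k0) := by rw [hEdef]; simp
    have h2 : (∏ i : {i : Fin N // i ∉ ({k0} : Finset (Fin N))}, E i.1 (x i.1))
        = p (fun i => x i.1) := by
      rw [hpdef, prodState]
      refine Finset.prod_congr rfl fun i _ => ?_
      rw [hEdef]
      show (if h : (i : Fin N) ∈ ({k0} : Finset (Fin N)) then a else e m₀ ⟨i, h⟩) (x i) = _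
      rw [dif_neg i.2]
    rw [h1, h2]
  have hprodF : ∀ x : Fin N → Fin 2, prodState F x = b (x k0) * q (fun i => x i.1) := by
    intro x
    rw [prodState, GhzAux.prod_split k0 (fun i => F i (x i))]
    have h1 : F k0 (x k0) = b (x k0) := by rw [hFdef]; simp
    have h2 : (∏ i : {i : Fin N // i ∉ ({k0} : Finset (Fin N))}, F i.1 (x i.1))
        = q (fun i => x i.1) := by
      rw [hqdef, prodState]
      refine Finset.prod_congr rfl fun i _ => ?_
      rw [hFdef]
      show (if h : (i : Fin N) ∈ ({k0} : Finset (Fin N)) then b else e m₁ ⟨i, h⟩) (x i) = _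
      rw [dif_neg i.2]
    rw [h1, h2]
  have hEF : ∀ x, ψ x = prodState E x + prodState F x := by
    intro x
    rw [hψφ x, hφab, hprodE, hprodF]
  -- independence at every site
  have hdet : ∀ i, E i 0 * F i 1 - E i 1 * F i 0 ≠ 0 := by
    intro i hdi
    apply hent
    rcases GhzAux.fin2_dep (E i) (F i) hdi with ⟨c, hc'⟩ | h0
    · apply GhzAux.factor_contra ψ i hunit (hfrag i) (E i)
        (fun y => (∏ j : {j : Fin N // j ∉ ({i} : Finset (Fin N))}, E j.1 (y j))
          + c * ∏ j : {j : Fin N // j ∉ ({i} : Finset (Fin N))}, F j.1 (y j))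
      intro x
      rw [hEF x, prodState, prodState,
        GhzAux.prod_split i (fun j => E j (x j)), GhzAux.prod_split i (fun j => F j (x j))]
      have hFc : F i (x i) = c * E i (x i) := by rw [hc']; simp
      rw [hFc]
      ring
    · apply GhzAux.factor_contra ψ i hunit (hfrag i) (F i)
        (fun y => ∏ j : {j : Fin N // j ∉ ({i} : Finset (Fin N))}, F j.1 (y j))
      intro x
      rw [hEF x, prodState, prodState,
        GhzAux.prod_split i (fun j => E j (x j)), GhzAux.prod_split i (fun j => F j (x j))]
      have hE0 : E i (x i) = 0 := by rw [h0]; rfl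
      rw [hE0]
      ring
  -- SLOCC matrices
  set M : Fin N → Matrix (Fin 2) (Fin 2) ℂ :=
    fun i => Matrix.of ![![E i 0, F i 0], ![E i 1, F i 1]] with hMdef
  have hdetM : ∀ i, (M i).det ≠ 0 := by
    intro i
    rw [Matrix.det_fin_two]
    show E i 0 * F i 1 - F i 0 * E i 1 ≠ 0
    intro h
    exact hdet i (by linear_combination h)
  set sc : Fin N → ℂ := fun i => if i = k0 then ((Real.sqrt 2 : ℝ) : ℂ)⁻¹ else 1 with hscdef
  have hsqrt2 : ((Real.sqrt 2 : ℝ) : ℂ) ≠ 0 := by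
    simp [Real.sqrt_eq_zero']
  have hsc : ∀ i, sc i ≠ 0 := by
    intro i
    rw [hscdef]
    by_cases h : i = k0 <;> simp [h, hsqrt2]
  refine ⟨fun i => sc i • (M i)⁻¹, 1, ?_, by simp, ?_⟩
  · intro i
    rw [Matrix.isUnit_iff_isUnit_det, isUnit_iff_ne_zero, Matrix.det_smul,
      Matrix.det_nonsing_inv]
    simp only [Fintype.card_fin]
    refine mul_ne_zero (pow_ne_zero 2 (hsc i)) ?_
    rw [Ring.inverse_eq_inv]
    exact inv_ne_zero (hdetM i)
  · rw [one_smul]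
    funext x
    -- compute the action of the local operator on each product term
    have happly : ∀ (G : Fin N → Fin 2 → ℂ),
        (∑ y : Fin N → Fin 2, (∏ i, (sc i • (M i)⁻¹) (x i) (y i)) * prodState G y)
        = ∏ i, ((sc i • (M i)⁻¹).mulVec (G i)) (x i) := by
      intro G
      have hterm : ∀ y : Fin N → Fin 2, (∏ i, (sc i • (M i)⁻¹) (x i) (y i)) * prodState G y
          = ∏ i, ((sc i • (M i)⁻¹) (x i) (y i) * G i (y i)) := by
        intro y
        rw [prodState, ← Finset.prod_mul_distrib]
      simp only [hterm]
      have hswap : (∑ y : Fin N → Fin 2, ∏ i, ((sc i • (M i)⁻¹) (x i) (y i) * G i (y i)))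
          = ∏ i, ∑ j : Fin 2, ((sc i • (M i)⁻¹) (x i) j * G i j) := by
        rw [Finset.prod_univ_sum, Fintype.piFinset_univ]
      rw [hswap]
      refine Finset.prod_congr rfl fun i _ => ?_
      rw [Matrix.mulVec, dotProduct]
    have hinvM : ∀ i (u : Fin 2 → ℂ), u = (M i).mulVec u → ∀ hu : True, True := fun _ _ _ _ => trivial
    have hME : ∀ i, (M i).mulVec ![1, 0] = E i := by
      intro i
      funext r
      rw [Matrix.mulVec, dotProduct, Fin.sum_univ_two]
      have h01 : r = 0 ∨ r = 1 := by omega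
      rcases h01 with h | h <;> subst h <;> simp [hMdef]
    have hMF : ∀ i, (M i).mulVec ![0, 1] = F i := by
      intro i
      funext r
      rw [Matrix.mulVec, dotProduct, Fin.sum_univ_two]
      have h01 : r = 0 ∨ r = 1 := by omega
      rcases h01 with h | h <;> subst h <;> simp [hMdef]
    have hBE : ∀ i, ((sc i • (M i)⁻¹).mulVec (E i)) = sc i • (![1, 0] : Fin 2 → ℂ) := by
      intro i
      rw [Matrix.smul_mulVec, ← hME i, Matrix.mulVec_mulVec,
        Matrix.nonsing_inv_mul _ (isUnit_iff_ne_zero.mpr (hdetM i)), Matrix.one_mulVec]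
    have hBF : ∀ i, ((sc i • (M i)⁻¹).mulVec (F i)) = sc i • (![0, 1] : Fin 2 → ℂ) := by
      intro i
      rw [Matrix.smul_mulVec, ← hMF i, Matrix.mulVec_mulVec,
        Matrix.nonsing_inv_mul _ (isUnit_iff_ne_zero.mpr (hdetM i)), Matrix.one_mulVec]
    have hscprod : (∏ i, sc i) = ((Real.sqrt 2 : ℝ) : ℂ)⁻¹ := by
      rw [hscdef]
      rw [Finset.prod_ite_eq' Finset.univ k0 (fun _ => ((Real.sqrt 2 : ℝ) : ℂ)⁻¹)]
      simp
    have hind0 : (∏ i, (![1, 0] : Fin 2 → ℂ) (x i)) = if x = (fun _ => 0) then 1 else 0 := by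
      by_cases hx : x = fun _ => 0
      · rw [if_pos hx, hx]
        simp
      · rw [if_neg hx]
        have hex : ∃ i, x i ≠ 0 := by
          by_contra hc
          push_neg at hc
          exact hx (funext hc)
        obtain ⟨i, hi⟩ := hex
        refine Finset.prod_eq_zero (Finset.mem_univ i) ?_
        have : x i = 1 := by omega
        rw [this]
        simp
    have hind1 : (∏ i, (![0, 1] : Fin 2 → ℂ) (x i)) = if x = (fun _ => 1) then 1 else 0 := by
      by_cases hx : x = fun _ => 1
      · rw [if_pos hx, hx]
        simp
      · rw [if_neg hx]
        have hex : ∃ i, x i ≠ 1 := by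
          by_contra hc
          push_neg at hc
          exact hx (funext hc)
        obtain ⟨i, hi⟩ := hex
        refine Finset.prod_eq_zero (Finset.mem_univ i) ?_
        have : x i = 0 := by omega
        rw [this]
        simp
    calc applyLocal (fun i => sc i • (M i)⁻¹) ψ x
        = ∑ y : Fin N → Fin 2, (∏ i, (sc i • (M i)⁻¹) (x i) (y i))
            * (prodState E y + prodState F y) := by
          rw [applyLocal]
          exact Finset.sum_congr rfl fun y _ => by rw [hEF y]
      _ = (∑ y : Fin N → Fin 2, (∏ i, (sc i • (M i)⁻¹) (x i) (y i)) * prodState E y)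
          + ∑ y : Fin N → Fin 2, (∏ i, (sc i • (M i)⁻¹) (x i) (y i)) * prodState F y := by
          rw [← Finset.sum_add_distrib]
          exact Finset.sum_congr rfl fun y _ => by ring
      _ = (∏ i, ((sc i • (M i)⁻¹).mulVec (E i)) (x i))
          + ∏ i, ((sc i • (M i)⁻¹).mulVec (F i)) (x i) := by rw [happly, happly]
      _ = (∏ i, (sc i • (![1, 0] : Fin 2 → ℂ)) (x i))
          + ∏ i, (sc i • (![0, 1] : Fin 2 → ℂ)) (x i) := by
          congr 1
          · exact Finset.prod_congr rfl fun i _ => by rw [hBE i]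
          · exact Finset.prod_congr rfl fun i _ => by rw [hBF i]
      _ = (∏ i, sc i) * (∏ i, (![1, 0] : Fin 2 → ℂ) (x i))
          + (∏ i, sc i) * ∏ i, (![0, 1] : Fin 2 → ℂ) (x i) := by
          simp only [Pi.smul_apply, smul_eq_mul, Finset.prod_mul_distrib]
      _ = ghzState N x := by
          rw [hscprod, hind0, hind1, ghzState]
          rw [div_eq_inv_mul]
          ring
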